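/- Let a, b ∈ ℝ and define k := −(a + √(a² + b⁴))/b if b ≠ 0 and k := 0 if b = 0 (Sontag's formula). If b = 0 implies a < 0, then a + b·k < 0. Moreover, when b ≠ 0 one has a + b·k = −√(a² + b⁴). -/

import Mathlib

/-- Sontag's formula: with `k = −(a + √(a² + b⁴))/b` if `b ≠ 0` and `k = 0` otherwise,
the stabilizability condition `b = 0 → a < 0` implies `a + b·k < 0`; moreover when
`b ≠ 0` one has `a + b·k = −√(a² + b⁴)`. -/
theorem sontag_formula (a b : ℝ) (k : ℝ)
    (hk : k = if b ≠ 0 then -(a + Real.sqrt (a ^ 2 + b ^ 4)) / b else 0)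
    (h : b = 0 → a < 0) :
    a + b * k < 0 ∧ (b ≠ 0 → a + b * k = -Real.sqrt (a ^ 2 + b ^ 4)) := by
  by_cases hb : b = 0
  · subst hb
    simp only [ne_eq, not_true_eq_false, if_false] at hk
    subst hk
    exact ⟨by simpa using h rfl, fun h' => absurd rfl h'⟩
  · have heq : a + b * k = -Real.sqrt (a ^ 2 + b ^ 4) := by
      rw [hk, if_pos hb]
      field_simp
      ring
    refine ⟨?_, fun _ => heq⟩
    rw [heq]
    have hpos : 0 < a ^ 2 + b ^ 4 := by positivity
    have := Real.sqrt_pos.mpr hpos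
    linarith
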